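/- For every ε > 0 there exists K > 0 such that for all k ∈ ℂ with |k| ≥ K and all x ∈ [0,ℓ] one has |∫₀ˣ sin(k(x−2t)) q(t) dt − (1/(2k))·(q(x) − q(0))·cos(kx)| ≤ ε · e^{|Im k| x} / |k|. -/

import Mathlib

open MeasureTheory intervalIntegral Real

namespace GLOsc

lemma norm_cos_le (z : ℂ) : ‖Complex.cos z‖ ≤ Real.exp |z.im| := by
  have h : Complex.cos z = (Complex.exp (z * Complex.I) + Complex.exp (-z * Complex.I)) / 2 := by
    rw [← Complex.two_cos]; ring
  rw [h]
  have h1 : ‖Complex.exp (z * Complex.I)‖ = Real.exp (-z.im) := by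
    rw [Complex.norm_exp]; simp [Complex.mul_I_re]
  have h2 : ‖Complex.exp (-z * Complex.I)‖ = Real.exp z.im := by
    rw [Complex.norm_exp]; simp [Complex.mul_I_re]
  calc ‖(Complex.exp (z * Complex.I) + Complex.exp (-z * Complex.I)) / 2‖
      ≤ (‖Complex.exp (z * Complex.I)‖ + ‖Complex.exp (-z * Complex.I)‖) / 2 := by
        rw [norm_div, Complex.norm_ofNat]
        gcongr
        exact norm_add_le _ _
    _ ≤ (Real.exp |z.im| + Real.exp |z.im|) / 2 := by
        rw [h1, h2]; gcongr <;> [exact neg_le_abs z.im; exact le_abs_self z.im]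
    _ = Real.exp |z.im| := by ring

lemma norm_sin_le (z : ℂ) : ‖Complex.sin z‖ ≤ Real.exp |z.im| := by
  have h : Complex.sin z = (Complex.exp (-z * Complex.I) - Complex.exp (z * Complex.I)) * Complex.I / 2 := by
    rw [Complex.sin]
  rw [h]
  have h1 : ‖Complex.exp (z * Complex.I)‖ = Real.exp (-z.im) := by
    rw [Complex.norm_exp]; simp [Complex.mul_I_re]
  have h2 : ‖Complex.exp (-z * Complex.I)‖ = Real.exp z.im := by
    rw [Complex.norm_exp]; simp [Complex.mul_I_re]
  calc ‖(Complex.exp (-z * Complex.I) - Complex.exp (z * Complex.I)) * Complex.I / 2‖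
      ≤ (‖Complex.exp (-z * Complex.I)‖ + ‖Complex.exp (z * Complex.I)‖) / 2 := by
        rw [norm_div, norm_mul, Complex.norm_I, mul_one, Complex.norm_ofNat]
        gcongr
        exact norm_sub_le _ _
    _ ≤ (Real.exp |z.im| + Real.exp |z.im|) / 2 := by
        rw [h1, h2]; gcongr <;> [exact le_abs_self z.im; exact neg_le_abs z.im]
    _ = Real.exp |z.im| := by ring

lemma im_k_mul {k : ℂ} (r : ℝ) : (k * (r : ℂ)).im = k.im * r := by
  simp [Complex.mul_im]

lemma arg_eq (k : ℂ) (x t : ℝ) : k * ((x : ℂ) - 2 * t) = k * (((x - 2*t : ℝ) : ℂ)) := by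
  push_cast; ring

lemma norm_sin_arg_le {k : ℂ} {x t : ℝ} (ht : t ∈ Set.Icc 0 x) :
    ‖Complex.sin (k * ((x : ℂ) - 2 * t))‖ ≤ Real.exp (|k.im| * x) := by
  obtain ⟨ht0, htx⟩ := ht
  refine (norm_sin_le _).trans ?_
  apply Real.exp_le_exp.mpr
  rw [arg_eq, im_k_mul, abs_mul]
  have : |x - 2*t| ≤ x := by
    rw [abs_le]; constructor <;> nlinarith
  calc |k.im| * |x - 2*t| ≤ |k.im| * x := by gcongr
    _ ≤ |k.im| * x := le_rfl

lemma norm_cos_arg_le {k : ℂ} {x t : ℝ} (ht : t ∈ Set.Icc 0 x) :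
    ‖Complex.cos (k * ((x : ℂ) - 2 * t))‖ ≤ Real.exp (|k.im| * x) := by
  obtain ⟨ht0, htx⟩ := ht
  refine (norm_cos_le _).trans ?_
  apply Real.exp_le_exp.mpr
  rw [arg_eq, im_k_mul, abs_mul]
  have : |x - 2*t| ≤ x := by
    rw [abs_le]; constructor <;> nlinarith
  calc |k.im| * |x - 2*t| ≤ |k.im| * x := by gcongr
    _ ≤ |k.im| * x := le_rfl

/-- derivative of `t ↦ cos (k (x - 2t))` is `2k sin (k (x-2t))`. -/
lemma hasDerivAt_cos_arg (k : ℂ) (x : ℝ) (t : ℝ) :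
    HasDerivAt (fun s : ℝ => Complex.cos (k * ((x : ℂ) - 2 * s)))
      (2 * k * Complex.sin (k * ((x : ℂ) - 2 * t))) t := by
  have hz : HasDerivAt (fun z : ℂ => Complex.cos (k * ((x : ℂ) - 2 * z)))
      (2 * k * Complex.sin (k * ((x : ℂ) - 2 * (t : ℂ)))) (t : ℂ) := by
    have h1 : HasDerivAt (fun z : ℂ => k * ((x : ℂ) - 2 * z)) (-(2 * k)) (t : ℂ) := by
      have := ((hasDerivAt_id (t : ℂ)).const_mul (2 : ℂ)).const_sub (x : ℂ)
      have h2 := this.const_mul k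
      have : -(2*k) = k * (0 - 2 * 1) := by ring
      rw [this]; simpa using h2
    have := (Complex.hasDerivAt_cos (k * ((x : ℂ) - 2 * (t : ℂ)))).comp (t : ℂ) h1
    exact this.congr_deriv (by ring)
  exact hz.comp_ofReal

/-- derivative of `t ↦ sin (k (x - 2t))` is `-2k cos (k (x-2t))`. -/
lemma hasDerivAt_sin_arg (k : ℂ) (x : ℝ) (t : ℝ) :
    HasDerivAt (fun s : ℝ => Complex.sin (k * ((x : ℂ) - 2 * s)))
      (-(2 * k) * Complex.cos (k * ((x : ℂ) - 2 * t))) t := by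
  have hz : HasDerivAt (fun z : ℂ => Complex.sin (k * ((x : ℂ) - 2 * z)))
      (-(2 * k) * Complex.cos (k * ((x : ℂ) - 2 * (t : ℂ)))) (t : ℂ) := by
    have h1 : HasDerivAt (fun z : ℂ => k * ((x : ℂ) - 2 * z)) (-(2 * k)) (t : ℂ) := by
      have := ((hasDerivAt_id (t : ℂ)).const_mul (2 : ℂ)).const_sub (x : ℂ)
      have h2 := this.const_mul k
      have : -(2*k) = k * (0 - 2 * 1) := by ring
      rw [this]; simpa using h2
    have := (Complex.hasDerivAt_sin (k * ((x : ℂ) - 2 * (t : ℂ)))).comp (t : ℂ) h1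
    exact this.congr_deriv (by ring)
  exact hz.comp_ofReal

/-- `∫ t in s..b, sin (k (x - 2t)) dt = (cos (k(x-2b)) - cos (k(x-2s)))/(2k)` -/
lemma integral_sin_arg {k : ℂ} (hk : k ≠ 0) (x s b : ℝ) :
    ∫ t in s..b, Complex.sin (k * ((x : ℂ) - 2 * t))
      = (Complex.cos (k * ((x : ℂ) - 2 * b)) - Complex.cos (k * ((x : ℂ) - 2 * s))) / (2 * k) := by
  have hd : ∀ t ∈ Set.uIcc s b,
      HasDerivAt (fun u : ℝ => Complex.cos (k * ((x : ℂ) - 2 * u)) / (2 * k))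
        (Complex.sin (k * ((x : ℂ) - 2 * t))) t := by
    intro t _
    have := (hasDerivAt_cos_arg k x t).div_const (2 * k)
    have h2k : (2 : ℂ) * k ≠ 0 := by simp [hk]
    simpa [mul_div_assoc, mul_div_cancel_left₀ _ h2k] using this
  have hint : IntervalIntegrable (fun t : ℝ => Complex.sin (k * ((x : ℂ) - 2 * t))) volume s b := by
    apply Continuous.intervalIntegrable
    continuity
  rw [intervalIntegral.integral_eq_sub_of_hasDerivAt hd hint]
  ring

end GLOsc

namespace GLOsc2
open GLOsc

lemma triangle_swap {x : ℝ} (hx : 0 ≤ x) {f g : ℝ → ℂ}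
    (hf : IntegrableOn f (Set.Ioc 0 x)) (hg : Continuous g) :
    ∫ t in (0:ℝ)..x, (∫ s in (0:ℝ)..t, f s) * g t
      = ∫ s in (0:ℝ)..x, f s * ∫ t in s..x, g t := by
  set μ := volume.restrict (Set.Ioc (0:ℝ) x) with hμ
  have hfi : Integrable f μ := hf
  have hgi : Integrable g μ := hg.integrableOn_Ioc
  set H : ℝ × ℝ → ℂ := fun p => if p.1 ≤ p.2 then f p.1 * g p.2 else 0 with hH
  have hHint : Integrable H (μ.prod μ) := by
    have hprod : Integrable (fun p : ℝ × ℝ => f p.1 * g p.2) (μ.prod μ) := hfi.mul_prod hgi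
    have heq : H = Set.indicator {p : ℝ × ℝ | p.1 ≤ p.2} (fun p => f p.1 * g p.2) := by
      funext p; simp [hH, Set.indicator_apply, Set.mem_setOf_eq]
    rw [heq]
    exact hprod.indicator (measurableSet_le measurable_fst measurable_snd)
  have hswap : ∫ s, (∫ t, H (s, t) ∂μ) ∂μ = ∫ t, (∫ s, H (s, t) ∂μ) ∂μ :=
    MeasureTheory.integral_integral_swap hHint
  have hright : ∫ t, (∫ s, H (s, t) ∂μ) ∂μ
      = ∫ t in (0:ℝ)..x, (∫ s in (0:ℝ)..t, f s) * g t := by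
    rw [intervalIntegral.integral_of_le hx]
    refine setIntegral_congr_fun measurableSet_Ioc (fun t ht => ?_)
    have h1 : (fun s => H (s, t)) = Set.indicator (Set.Iic t) (fun s => f s * g t) := by
      funext s; simp [hH, Set.indicator_apply, Set.mem_Iic]
    rw [h1, MeasureTheory.integral_indicator measurableSet_Iic, hμ,
      Measure.restrict_restrict measurableSet_Iic]
    have h2 : Set.Iic t ∩ Set.Ioc 0 x = Set.Ioc 0 t := by
      ext s; simp only [Set.mem_inter_iff, Set.mem_Iic, Set.mem_Ioc]
      exact ⟨fun ⟨a, b, _⟩ => ⟨b, a⟩, fun ⟨a, b⟩ => ⟨b, a, b.trans ht.2⟩⟩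
    rw [h2, MeasureTheory.integral_mul_const, intervalIntegral.integral_of_le ht.1.le]
  have hleft : ∫ s, (∫ t, H (s, t) ∂μ) ∂μ
      = ∫ s in (0:ℝ)..x, f s * ∫ t in s..x, g t := by
    rw [intervalIntegral.integral_of_le hx]
    refine setIntegral_congr_fun measurableSet_Ioc (fun s hs => ?_)
    have h1 : (fun t => H (s, t)) = Set.indicator (Set.Ici s) (fun t => f s * g t) := by
      funext t; simp [hH, Set.indicator_apply, Set.mem_Ici]
    rw [h1, MeasureTheory.integral_indicator measurableSet_Ici, hμ,
      Measure.restrict_restrict measurableSet_Ici]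
    have h2 : Set.Ici s ∩ Set.Ioc 0 x = Set.Icc s x := by
      ext t; simp only [Set.mem_inter_iff, Set.mem_Ici, Set.mem_Ioc, Set.mem_Icc]
      exact ⟨fun ⟨a, _, c⟩ => ⟨a, c⟩, fun ⟨a, b⟩ => ⟨a, hs.1.trans_le a, b⟩⟩
    rw [h2, MeasureTheory.integral_Icc_eq_integral_Ioc, MeasureTheory.integral_const_mul,
      ← intervalIntegral.integral_of_le hs.2]
  rw [← hright, ← hswap, hleft]

end GLOsc2

namespace GLOsc3
open GLOsc GLOsc2

lemma key_identity (ℓ : ℝ) (q q' : ℝ → ℝ)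
    (hq' : IntervalIntegrable q' volume 0 ℓ)
    (hq : ∀ x ∈ Set.Icc (0 : ℝ) ℓ, q x = q 0 + ∫ t in (0:ℝ)..x, q' t)
    {k : ℂ} (hk : k ≠ 0) {x : ℝ} (hx : x ∈ Set.Icc (0:ℝ) ℓ) :
    (∫ t in (0:ℝ)..x, Complex.sin (k * ((x : ℂ) - 2 * t)) * (q t : ℂ))
        - (1 / (2 * k)) * ((q x : ℂ) - (q 0 : ℂ)) * Complex.cos (k * x)
      = -(1 / (2 * k)) * ∫ t in (0:ℝ)..x, (q' t : ℂ) * Complex.cos (k * ((x : ℂ) - 2 * t)) := by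
  obtain ⟨hx0, hxl⟩ := hx
  have huIcc : Set.uIcc (0:ℝ) x ⊆ Set.uIcc (0:ℝ) ℓ := by
    rw [Set.uIcc_of_le hx0, Set.uIcc_of_le (hx0.trans hxl)]
    exact Set.Icc_subset_Icc le_rfl hxl
  have h1 : IntervalIntegrable q' volume 0 x := hq'.mono_set huIcc
  set fC : ℝ → ℂ := fun t => (q' t : ℂ) with hfCdef
  have hfC : IntervalIntegrable fC volume 0 x := ⟨h1.1.ofReal, h1.2.ofReal⟩
  set g : ℝ → ℂ := fun t => Complex.sin (k * ((x : ℂ) - 2 * t)) with hgdef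
  have hg : Continuous g := by
    apply Complex.continuous_sin.comp
    continuity
  have h2k : (2 : ℂ) * k ≠ 0 := by simp [hk]
  -- the primitive of q'
  set F : ℝ → ℂ := fun t => ∫ s in (0:ℝ)..t, fC s with hFdef
  have hqc : ∀ t ∈ Set.uIcc (0:ℝ) x, (q t : ℂ) = (q 0 : ℂ) + F t := by
    intro t ht
    rw [Set.uIcc_of_le hx0] at ht
    have := hq t ⟨ht.1, ht.2.trans hxl⟩
    rw [this]
    push_cast
    simp only [hFdef, hfCdef]
    rw [intervalIntegral.integral_ofReal]
  -- continuity of F on [0,x]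
  have hFcont : ContinuousOn F (Set.uIcc (0:ℝ) x) :=
    intervalIntegral.continuousOn_primitive_interval' hfC Set.left_mem_uIcc
  have hcosc : Continuous (fun s : ℝ => Complex.cos (k * ((x:ℂ) - 2*s))) := by
    apply Complex.continuous_cos.comp; continuity
  have hintc : IntervalIntegrable (fun s => fC s * Complex.cos (k * ((x:ℂ) - 2*s))) volume 0 x :=
    hfC.mul_continuousOn hcosc.continuousOn
  have step1 : (∫ t in (0:ℝ)..x, g t * (q t : ℂ))
      = (∫ t in (0:ℝ)..x, g t * (q 0 : ℂ)) + ∫ t in (0:ℝ)..x, F t * g t := by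
    have hEq : Set.EqOn (fun t => g t * (q t : ℂ))
        (fun t => g t * (q 0:ℂ) + F t * g t) (Set.uIcc (0:ℝ) x) := by
      intro t ht; simp only; rw [hqc t ht]; ring
    rw [intervalIntegral.integral_congr hEq]
    exact intervalIntegral.integral_add
      ((hg.continuousOn.mul continuousOn_const).intervalIntegrable)
      ((hFcont.mul hg.continuousOn).intervalIntegrable)
  have hzero : (∫ t in (0:ℝ)..x, g t * (q 0:ℂ)) = 0 := by
    rw [intervalIntegral.integral_mul_const, hgdef, integral_sin_arg hk x 0 x]
    have hA : k * ((x:ℂ) - 2 * ((x:ℝ):ℂ)) = -(k * (x:ℂ)) := by push_cast; ring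
    have hB : k * ((x:ℂ) - 2 * ((0:ℝ):ℂ)) = k * (x:ℂ) := by push_cast; ring
    rw [hA, hB, Complex.cos_neg, sub_self, zero_div, zero_mul]
  have hswap : (∫ t in (0:ℝ)..x, F t * g t)
      = ∫ s in (0:ℝ)..x, fC s * ∫ t in s..x, g t := triangle_swap hx0 hfC.1 hg
  have hinner : ∀ s : ℝ, (∫ t in s..x, g t)
      = (Complex.cos (k * (x:ℂ)) - Complex.cos (k * ((x:ℂ) - 2*(s:ℂ)))) / (2*k) := by
    intro s
    rw [hgdef, integral_sin_arg hk x s x]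
    have hA : k * ((x:ℂ) - 2 * ((x:ℝ):ℂ)) = -(k * (x:ℂ)) := by push_cast; ring
    rw [hA, Complex.cos_neg]
  have hI : (∫ s in (0:ℝ)..x, fC s) = (q x : ℂ) - (q 0 : ℂ) := by
    have h5 : (∫ t in (0:ℝ)..x, q' t) = q x - q 0 := by rw [hq x ⟨hx0, hxl⟩]; ring
    simp only [hfCdef]
    rw [intervalIntegral.integral_ofReal, h5]
    push_cast; ring
  have hsplit : (∫ s in (0:ℝ)..x, fC s * ∫ t in s..x, g t)
      = (1/(2*k)) * Complex.cos (k*(x:ℂ)) * ((q x : ℂ) - (q 0 : ℂ))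
        - (1/(2*k)) * ∫ s in (0:ℝ)..x, fC s * Complex.cos (k * ((x:ℂ) - 2*(s:ℂ))) := by
    calc (∫ s in (0:ℝ)..x, fC s * ∫ t in s..x, g t)
        = ∫ s in (0:ℝ)..x, ((1/(2*k)) * Complex.cos (k*(x:ℂ)) * fC s
            - (1/(2*k)) * (fC s * Complex.cos (k * ((x:ℂ) - 2*(s:ℂ))))) := by
          apply intervalIntegral.integral_congr
          intro s _
          simp only
          rw [hinner s]
          field_simp
      _ = (1/(2*k)) * Complex.cos (k*(x:ℂ)) * (∫ s in (0:ℝ)..x, fC s)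
            - (1/(2*k)) * ∫ s in (0:ℝ)..x, fC s * Complex.cos (k * ((x:ℂ) - 2*(s:ℂ))) := by
          rw [intervalIntegral.integral_sub (hfC.const_mul _) (hintc.const_mul _),
            intervalIntegral.integral_const_mul, intervalIntegral.integral_const_mul]
      _ = _ := by rw [hI]
  calc (∫ t in (0:ℝ)..x, g t * (q t : ℂ)) - (1 / (2 * k)) * ((q x : ℂ) - (q 0 : ℂ)) * Complex.cos (k * x)
      = ((∫ t in (0:ℝ)..x, g t * (q 0:ℂ)) + ∫ t in (0:ℝ)..x, F t * g t)
          - (1 / (2 * k)) * ((q x : ℂ) - (q 0 : ℂ)) * Complex.cos (k * x) := by rw [step1]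
    _ = (∫ s in (0:ℝ)..x, fC s * ∫ t in s..x, g t)
          - (1 / (2 * k)) * ((q x : ℂ) - (q 0 : ℂ)) * Complex.cos (k * x) := by
        rw [hzero, zero_add, hswap]
    _ = -(1 / (2 * k)) * ∫ t in (0:ℝ)..x, fC t * Complex.cos (k * ((x:ℂ) - 2*(t:ℂ))) := by
        rw [hsplit]; ring
  

end GLOsc3

namespace GLOsc4
open GLOsc Polynomial

set_option maxHeartbeats 1000000 in
lemma poly_bound (p : ℝ[X]) {k : ℂ} (hk : k ≠ 0) {x ℓ : ℝ} (hx0 : 0 ≤ x) (hxl : x ≤ ℓ)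
    {M M' : ℝ} (hM : ∀ t ∈ Set.Icc 0 ℓ, |p.eval t| ≤ M)
    (hM' : ∀ t ∈ Set.Icc 0 ℓ, |p.derivative.eval t| ≤ M') :
    ‖∫ t in (0:ℝ)..x, ((p.eval t : ℝ) : ℂ) * Complex.cos (k * ((x:ℂ) - 2*(t:ℂ)))‖
      ≤ (2*M + ℓ*M') * Real.exp (|k.im| * x) / ‖k‖ := by
  have hxx : x ∈ Set.Icc 0 ℓ := ⟨hx0, hxl⟩
  have h0l : (0:ℝ) ∈ Set.Icc 0 ℓ := ⟨le_rfl, hx0.trans hxl⟩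
  have hM0 : 0 ≤ M := (abs_nonneg _).trans (hM 0 h0l)
  have hM'0 : 0 ≤ M' := (abs_nonneg _).trans (hM' 0 h0l)
  have h2k : (2:ℂ) * k ≠ 0 := by simp [hk]
  set u : ℝ → ℂ := fun t => ((p.eval t : ℝ) : ℂ) with hu
  set u' : ℝ → ℂ := fun t => ((p.derivative.eval t : ℝ) : ℂ) with hu'
  set v : ℝ → ℂ := fun t => Complex.sin (k * ((x:ℂ) - 2*(t:ℂ))) / (-(2*k)) with hv
  set v' : ℝ → ℂ := fun t => Complex.cos (k * ((x:ℂ) - 2*(t:ℂ))) with hv'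
  have hud : ∀ t ∈ Set.uIcc (0:ℝ) x, HasDerivAt u (u' t) t := by
    intro t _
    have h : HasDerivAt (fun s : ℝ => p.eval s) (p.derivative.eval t) t := p.hasDerivAt t
    exact h.ofReal_comp
  have hvd : ∀ t ∈ Set.uIcc (0:ℝ) x, HasDerivAt v (v' t) t := by
    intro t _
    have := (hasDerivAt_sin_arg k x t).div_const (-(2*k))
    have he : -(2*k) * Complex.cos (k * ((x:ℂ) - 2*(t:ℂ))) / -(2*k) = v' t := by
      rw [hv']
      field_simp
    rw [← he]
    exact this
  have hu'int : IntervalIntegrable u' volume 0 x := by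
    apply Continuous.intervalIntegrable
    exact Complex.continuous_ofReal.comp (p.derivative.continuous_aeval)
  have hv'int : IntervalIntegrable v' volume 0 x := by
    apply Continuous.intervalIntegrable
    apply Complex.continuous_cos.comp; continuity
  have hibp := intervalIntegral.integral_mul_deriv_eq_deriv_mul
    hud hvd hu'int hv'int
  rw [hibp]
  have hnv : ∀ t ∈ Set.Icc 0 x, ‖v t‖ ≤ Real.exp (|k.im| * x) / (2 * ‖k‖) := by
    intro t ht
    rw [hv]
    simp only [norm_div, norm_neg, norm_mul, Complex.norm_ofNat]
    have hden : (0:ℝ) < 2 * ‖k‖ := mul_pos two_pos (norm_pos_iff.mpr hk)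
    exact (div_le_div_iff_of_pos_right hden).mpr (norm_sin_arg_le ht)
  set E := Real.exp (|k.im| * x) with hE
  have hE1 : (1:ℝ) ≤ E := by
    rw [hE]; apply Real.one_le_exp; positivity
  have hE0 : (0:ℝ) < E := lt_of_lt_of_le one_pos hE1
  have hk0 : (0:ℝ) < ‖k‖ := norm_pos_iff.mpr hk
  have hintbound : ‖∫ t in (0:ℝ)..x, u' t * v t‖ ≤ ℓ * M' * (E / (2 * ‖k‖)) := by
    calc ‖∫ t in (0:ℝ)..x, u' t * v t‖ ≤ ∫ t in (0:ℝ)..x, ‖u' t * v t‖ :=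
          intervalIntegral.norm_integral_le_integral_norm hx0
      _ ≤ ∫ _t in (0:ℝ)..x, M' * (E / (2 * ‖k‖)) := by
          apply intervalIntegral.integral_mono_on hx0
          · apply IntervalIntegrable.norm
            apply hu'int.mul_continuousOn
            apply Continuous.continuousOn
            apply Continuous.div_const
            apply Complex.continuous_sin.comp; continuity
          · exact intervalIntegrable_const
          · intro t ht
            rw [norm_mul]
            have h1 : ‖u' t‖ ≤ M' := by
              rw [hu', Complex.norm_real, Real.norm_eq_abs]
              exact hM' t ⟨ht.1, ht.2.trans hxl⟩
            have h2 := hnv t ht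
            have : (0:ℝ) ≤ ‖v t‖ := norm_nonneg _
            nlinarith [norm_nonneg (u' t)]
      _ = x * (M' * (E / (2 * ‖k‖))) := by
          rw [intervalIntegral.integral_const, smul_eq_mul, sub_zero]
      _ ≤ ℓ * M' * (E / (2 * ‖k‖)) := by
          rw [mul_assoc]
          have : (0:ℝ) ≤ M' * (E / (2 * ‖k‖)) := by positivity
          exact mul_le_mul_of_nonneg_right hxl this
  have hbnd : ∀ t ∈ Set.Icc 0 x, ‖u t * v t‖ ≤ M * (E / (2 * ‖k‖)) := by
    intro t ht
    rw [norm_mul]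
    have h1 : ‖u t‖ ≤ M := by
      rw [hu, Complex.norm_real, Real.norm_eq_abs]
      exact hM t ⟨ht.1, ht.2.trans hxl⟩
    have h2 := hnv t ht
    nlinarith [norm_nonneg (u t), norm_nonneg (v t)]
  calc ‖u x * v x - u 0 * v 0 - ∫ t in (0:ℝ)..x, u' t * v t‖
      ≤ ‖u x * v x - u 0 * v 0‖ + ‖∫ t in (0:ℝ)..x, u' t * v t‖ := norm_sub_le _ _
    _ ≤ (‖u x * v x‖ + ‖u 0 * v 0‖) + ‖∫ t in (0:ℝ)..x, u' t * v t‖ := by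
        gcongr; exact norm_sub_le _ _
    _ ≤ (M * (E / (2 * ‖k‖)) + M * (E / (2 * ‖k‖))) + ℓ * M' * (E / (2 * ‖k‖)) := by
        exact add_le_add (add_le_add (hbnd x ⟨hx0, le_rfl⟩) (hbnd 0 ⟨le_rfl, hx0⟩)) hintbound
    _ = (2*M + ℓ*M') * E / (2 * ‖k‖) := by ring
    _ ≤ (2*M + ℓ*M') * E / ‖k‖ := by
        have hl0 : (0:ℝ) ≤ ℓ := hx0.trans hxl
        have h1 : (0:ℝ) ≤ (2*M + ℓ*M') * E :=
          mul_nonneg (by nlinarith [mul_nonneg hl0 hM'0]) hE0.le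
        exact div_le_div_of_nonneg_left h1 hk0 (by linarith)
end GLOsc4

namespace GLOsc5
open Polynomial

lemma approx (ℓ : ℝ) (hℓ : 0 < ℓ) (q' : ℝ → ℝ) (hq' : IntervalIntegrable q' volume 0 ℓ)
    {ε : ℝ} (hε : 0 < ε) :
    ∃ p : ℝ[X], (∫ t in (0:ℝ)..ℓ, |q' t - p.eval t|) ≤ ε := by
  have hIoc : IntegrableOn q' (Set.Ioc 0 ℓ) volume := hq'.1
  set f₀ : ℝ → ℝ := (Set.Ioc (0:ℝ) ℓ).indicator q' with hf₀def
  have hf₀ : Integrable f₀ volume := hIoc.integrable_indicator measurableSet_Ioc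
  obtain ⟨g, -, hgL1, hgc, hgint⟩ :=
    hf₀.exists_hasCompactSupport_integral_sub_le (half_pos hε)
  obtain ⟨p, hp⟩ := exists_polynomial_near_of_continuousOn 0 ℓ g hgc.continuousOn
    (ε/(2*ℓ)) (by positivity)
  refine ⟨p, ?_⟩
  have hgI : IntervalIntegrable g volume 0 ℓ := hgc.intervalIntegrable 0 ℓ
  have hpI : IntervalIntegrable (fun t => p.eval t) volume 0 ℓ :=
    (p.continuous_aeval).intervalIntegrable 0 ℓ
  have step1 : (∫ t in (0:ℝ)..ℓ, |q' t - p.eval t|)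
      ≤ (∫ t in (0:ℝ)..ℓ, |q' t - g t|) + ∫ t in (0:ℝ)..ℓ, |g t - p.eval t| := by
    rw [← intervalIntegral.integral_add ((hq'.sub hgI).abs) ((hgI.sub hpI).abs)]
    apply intervalIntegral.integral_mono_on hℓ.le ((hq'.sub hpI).abs)
      (((hq'.sub hgI).abs).add ((hgI.sub hpI).abs))
    intro t _
    calc |q' t - p.eval t| = |(q' t - g t) + (g t - p.eval t)| := by ring_nf
      _ ≤ |q' t - g t| + |g t - p.eval t| := abs_add_le _ _
  have step2 : (∫ t in (0:ℝ)..ℓ, |q' t - g t|) ≤ ε/2 := by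
    have h1 : (∫ t in (0:ℝ)..ℓ, |q' t - g t|)
        = ∫ t in Set.Ioc (0:ℝ) ℓ, ‖f₀ t - g t‖ := by
      rw [intervalIntegral.integral_of_le hℓ.le]
      refine setIntegral_congr_fun measurableSet_Ioc (fun t ht => ?_)
      rw [Real.norm_eq_abs, hf₀def, Set.indicator_of_mem ht]
    rw [h1]
    refine le_trans (setIntegral_le_integral ((hf₀.sub hgint).norm) ?_) hgL1
    exact Filter.Eventually.of_forall (fun t => norm_nonneg _)
  have step3 : (∫ t in (0:ℝ)..ℓ, |g t - p.eval t|) ≤ ε/2 := by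
    calc (∫ t in (0:ℝ)..ℓ, |g t - p.eval t|) ≤ ∫ _t in (0:ℝ)..ℓ, ε/(2*ℓ) := by
          apply intervalIntegral.integral_mono_on hℓ.le ((hgI.sub hpI).abs)
            intervalIntegrable_const
          intro t ht
          rw [abs_sub_comm]
          exact (hp t ht).le
      _ = ℓ * (ε/(2*ℓ)) := by rw [intervalIntegral.integral_const, smul_eq_mul, sub_zero]
      _ = ε/2 := by field_simp
  linarith

end GLOsc5


set_option maxHeartbeats 1000000 in
/-- Riemann–Lebesgue type estimate: for `q` absolutely continuous on `[0, ℓ]`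
with derivative `q' ∈ L¹((0,ℓ))`, the oscillatory integral `∫₀ˣ sin(k(x−2t)) q(t) dt` equals
`(1/(2k))(q(x) − q(0)) cos(kx)` up to an error `o(e^{|Im k| x}/|k|)` uniformly in `x ∈ [0, ℓ]`. -/
theorem gelfand_levitan_oscillatory_sin_integral
    (ℓ : ℝ) (hℓ : 0 < ℓ) (q q' : ℝ → ℝ)
    (hq' : IntervalIntegrable q' volume 0 ℓ)
    (hq : ∀ x ∈ Set.Icc (0 : ℝ) ℓ, q x = q 0 + ∫ t in (0 : ℝ)..x, q' t) :
    ∀ ε > 0, ∃ K > 0, ∀ k : ℂ, K ≤ ‖k‖ → ∀ x ∈ Set.Icc (0 : ℝ) ℓ,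
      ‖(∫ t in (0 : ℝ)..x, Complex.sin (k * ((x : ℂ) - 2 * t)) * (q t : ℂ))
          - (1 / (2 * k)) * ((q x : ℂ) - (q 0 : ℂ)) * Complex.cos (k * x)‖
        ≤ ε * Real.exp (|k.im| * x) / ‖k‖ := by
  intro ε hε
  obtain ⟨p, hp⟩ := GLOsc5.approx ℓ hℓ q' hq' (show (0:ℝ) < ε/4 by linarith)
  obtain ⟨M, hM⟩ := isCompact_Icc.exists_bound_of_continuousOn
    (f := fun t => p.eval t) (s := Set.Icc (0:ℝ) ℓ) (p.continuous_aeval.continuousOn)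
  obtain ⟨M', hM'⟩ := isCompact_Icc.exists_bound_of_continuousOn
    (f := fun t => p.derivative.eval t) (s := Set.Icc (0:ℝ) ℓ)
    (p.derivative.continuous_aeval.continuousOn)
  set C : ℝ := 2*M + ℓ*M' with hC
  have hM0 : 0 ≤ M := (norm_nonneg _).trans (hM 0 ⟨le_rfl, hℓ.le⟩)
  have hM'0 : 0 ≤ M' := (norm_nonneg _).trans (hM' 0 ⟨le_rfl, hℓ.le⟩)
  have hC0 : 0 ≤ C := by rw [hC]; nlinarith [mul_nonneg hℓ.le hM'0]
  refine ⟨max ((C+1)/ε) 1, lt_of_lt_of_le one_pos (le_max_right _ _), ?_⟩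
  intro k hK x hx
  obtain ⟨hx0, hxl⟩ := hx
  have hk1 : (1:ℝ) ≤ ‖k‖ := le_trans (le_max_right _ _) hK
  have hk0 : (0:ℝ) < ‖k‖ := lt_of_lt_of_le one_pos hk1
  have hk : k ≠ 0 := norm_pos_iff.mp hk0
  have hCk : C / ‖k‖ ≤ ε := by
    rw [div_le_iff₀ hk0]
    have h1 : (C+1)/ε ≤ ‖k‖ := le_trans (le_max_left _ _) hK
    rw [div_le_iff₀ hε] at h1
    nlinarith
  set E := Real.exp (|k.im| * x) with hE
  have hE0 : (0:ℝ) < E := Real.exp_pos _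
  -- key identity
  have hKI := GLOsc3.key_identity ℓ q q' hq' hq hk ⟨hx0, hxl⟩
  rw [hKI]
  -- integrability pieces
  have huIcc : Set.uIcc (0:ℝ) x ⊆ Set.uIcc (0:ℝ) ℓ := by
    rw [Set.uIcc_of_le hx0, Set.uIcc_of_le (hx0.trans hxl)]
    exact Set.Icc_subset_Icc le_rfl hxl
  have hq'x : IntervalIntegrable q' volume 0 x := hq'.mono_set huIcc
  have hq'xC : IntervalIntegrable (fun t => ((q' t : ℝ) : ℂ)) volume 0 x :=
    ⟨hq'x.1.ofReal, hq'x.2.ofReal⟩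
  have hcosc : Continuous (fun t : ℝ => Complex.cos (k * ((x:ℂ) - 2*(t:ℂ)))) := by
    apply Complex.continuous_cos.comp; continuity
  have hpxC : IntervalIntegrable (fun t => ((p.eval t : ℝ) : ℂ)) volume 0 x :=
    (Complex.continuous_ofReal.comp p.continuous_aeval).intervalIntegrable 0 x
  have hA : IntervalIntegrable
      (fun t => ((q' t : ℝ) : ℂ) * Complex.cos (k * ((x:ℂ) - 2*(t:ℂ)))) volume 0 x :=
    hq'xC.mul_continuousOn hcosc.continuousOn
  have hAB : IntervalIntegrable
      (fun t => (((q' t : ℝ) : ℂ) - ((p.eval t : ℝ) : ℂ))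
        * Complex.cos (k * ((x:ℂ) - 2*(t:ℂ)))) volume 0 x :=
    (hq'xC.sub hpxC).mul_continuousOn hcosc.continuousOn
  have hB : IntervalIntegrable
      (fun t => ((p.eval t : ℝ) : ℂ) * Complex.cos (k * ((x:ℂ) - 2*(t:ℂ)))) volume 0 x :=
    hpxC.mul_continuousOn hcosc.continuousOn
  -- split the remainder integral
  have hsplit : (∫ t in (0:ℝ)..x, ((q' t : ℝ) : ℂ) * Complex.cos (k * ((x:ℂ) - 2*(t:ℂ))))
      = (∫ t in (0:ℝ)..x, (((q' t : ℝ) : ℂ) - ((p.eval t : ℝ) : ℂ))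
            * Complex.cos (k * ((x:ℂ) - 2*(t:ℂ))))
        + ∫ t in (0:ℝ)..x, ((p.eval t : ℝ) : ℂ) * Complex.cos (k * ((x:ℂ) - 2*(t:ℂ))) := by
    rw [← intervalIntegral.integral_add hAB hB]
    congr 1
    funext t
    ring
  -- bound on the difference part
  have hdiffbound : ‖∫ t in (0:ℝ)..x, (((q' t : ℝ) : ℂ) - ((p.eval t : ℝ) : ℂ))
      * Complex.cos (k * ((x:ℂ) - 2*(t:ℂ)))‖ ≤ (ε/4) * E := by
    calc ‖∫ t in (0:ℝ)..x, (((q' t : ℝ) : ℂ) - ((p.eval t : ℝ) : ℂ))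
          * Complex.cos (k * ((x:ℂ) - 2*(t:ℂ)))‖
        ≤ ∫ t in (0:ℝ)..x, ‖(((q' t : ℝ) : ℂ) - ((p.eval t : ℝ) : ℂ))
            * Complex.cos (k * ((x:ℂ) - 2*(t:ℂ)))‖ :=
          intervalIntegral.norm_integral_le_integral_norm hx0
      _ ≤ ∫ t in (0:ℝ)..x, |q' t - p.eval t| * E := by
          apply intervalIntegral.integral_mono_on hx0 (hAB.norm)
            (((hq'x.sub ((p.continuous_aeval).intervalIntegrable 0 x)).abs).mul_const E)
          intro t ht
          rw [norm_mul]
          have h1 : ‖((q' t : ℝ) : ℂ) - ((p.eval t : ℝ) : ℂ)‖ = |q' t - p.eval t| := by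
            rw [← Complex.ofReal_sub, Complex.norm_real, Real.norm_eq_abs]
          rw [h1]
          have h2 := GLOsc.norm_cos_arg_le (k := k) (x := x) (t := t) ht
          have h3 : (0:ℝ) ≤ |q' t - p.eval t| := abs_nonneg _
          exact mul_le_mul_of_nonneg_left h2 h3
      _ = (∫ t in (0:ℝ)..x, |q' t - p.eval t|) * E := intervalIntegral.integral_mul_const _ _
      _ ≤ (ε/4) * E := by
          apply mul_le_mul_of_nonneg_right _ hE0.le
          refine le_trans ?_ hp
          apply intervalIntegral.integral_mono_interval le_rfl hx0 hxl
          · exact Filter.Eventually.of_forall (fun t => abs_nonneg _)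
          · exact (hq'.sub ((p.continuous_aeval).intervalIntegrable 0 ℓ)).abs
  -- bound on the polynomial part
  have hpolybound := GLOsc4.poly_bound p hk hx0 hxl
    (fun t ht => by simpa [Real.norm_eq_abs] using hM t ht)
    (fun t ht => by simpa [Real.norm_eq_abs] using hM' t ht)
  -- combine
  have htotal : ‖∫ t in (0:ℝ)..x, ((q' t : ℝ) : ℂ)
      * Complex.cos (k * ((x:ℂ) - 2*(t:ℂ)))‖ ≤ (ε/4) * E + C * E / ‖k‖ := by
    rw [hsplit]
    exact le_trans (norm_add_le _ _) (add_le_add hdiffbound hpolybound)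
  have hnorm : ‖-(1 / (2 * k)) * ∫ t in (0:ℝ)..x, ((q' t : ℝ) : ℂ)
      * Complex.cos (k * ((x:ℂ) - 2*(t:ℂ)))‖
      = ‖∫ t in (0:ℝ)..x, ((q' t : ℝ) : ℂ)
          * Complex.cos (k * ((x:ℂ) - 2*(t:ℂ)))‖ / (2 * ‖k‖) := by
    rw [norm_mul, norm_neg, norm_div, norm_one, norm_mul, Complex.norm_ofNat]
    rw [div_mul_eq_mul_div, one_mul]
  rw [hnorm]
  rw [div_le_iff₀ (show (0:ℝ) < 2*‖k‖ by positivity)]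
  calc ‖∫ t in (0:ℝ)..x, ((q' t : ℝ) : ℂ) * Complex.cos (k * ((x:ℂ) - 2*(t:ℂ)))‖
      ≤ (ε/4) * E + C * E / ‖k‖ := htotal
    _ ≤ (ε/4) * E + ε * E := by
        have : C * E / ‖k‖ = (C / ‖k‖) * E := by ring
        rw [this]
        exact add_le_add le_rfl (mul_le_mul_of_nonneg_right hCk hE0.le)
    _ ≤ ε * E / ‖k‖ * (2 * ‖k‖) := by
        have hkne : ‖k‖ ≠ 0 := ne_of_gt hk0
        have h2 : ε * E / ‖k‖ * (2 * ‖k‖) = 2 * (ε * E) := by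
          have h3 : ε * E / ‖k‖ * (2 * ‖k‖) = (ε * E) * (2 * (‖k‖ / ‖k‖)) := by ring
          rw [h3, div_self hkne]
          ring
        rw [h2]; nlinarith
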